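/- There is no finite simple graph G satisfying all of the following: G is triangle-free; G has exactly 22 edges; every vertex of G has degree at least 3 and at most 5; G has two distinct nonadjacent vertices a and b with deg(a) = deg(b) = 5; a and b have at most four common neighbors; no common neighbor of a and b has degree 3, and exactly three common neighbors of a and b have degree 4; every vertex adjacent to a but not to b has degree at least 4; and every vertex adjacent to b but not to a has degree at least 4. -/

import Mathlib

theorem stmt_12 {V : Type*} [Fintype V] [DecidableEq V] (G : SimpleGraph V)
    [DecidableRel G.Adj]
    (htf : G.CliqueFree 3)
    (hcard : G.edgeFinset.card = 22)
    (hmin : ∀ v : V, 3 ≤ G.degree v)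
    (hmax : ∀ v : V, G.degree v ≤ 5)
    (a b : V) (hab : a ≠ b) (hnadj : ¬ G.Adj a b)
    (hda : G.degree a = 5) (hdb : G.degree b = 5)
    (hcn : (G.neighborFinset a ∩ G.neighborFinset b).card ≤ 4)
    (hx : ((G.neighborFinset a ∩ G.neighborFinset b).filter (fun v => G.degree v = 3)).card = 0)
    (hy : ((G.neighborFinset a ∩ G.neighborFinset b).filter (fun v => G.degree v = 4)).card = 3)
    (hua : ∀ v ∈ (G.neighborFinset a) \ (G.neighborFinset b), 4 ≤ G.degree v)
    (hub : ∀ v ∈ (G.neighborFinset b) \ (G.neighborFinset a), 4 ≤ G.degree v) :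
    False := by
  classical
  have tri : ∀ x y z : V, G.Adj x y → G.Adj x z → G.Adj y z → False := by
    intro x y z h1 h2 h3
    exact htf {x, y, z} (SimpleGraph.is3Clique_triple_iff.mpr ⟨h1, h2, h3⟩)
  set A := G.neighborFinset a with hAdef
  set B := G.neighborFinset b with hBdef
  set C := A ∩ B with hCdef
  set S := A ∪ B with hSdef
  have memA : ∀ {u : V}, u ∈ A ↔ G.Adj a u := fun {u} => G.mem_neighborFinset a u
  have memB : ∀ {u : V}, u ∈ B ↔ G.Adj b u := fun {u} => G.mem_neighborFinset b u
  have hcA : A.card = 5 := by rw [hAdef, G.card_neighborFinset_eq_degree, hda]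
  have hcB : B.card = 5 := by rw [hBdef, G.card_neighborFinset_eq_degree, hdb]
  have haA : a ∉ A := fun h => G.loopless.irrefl a (memA.1 h)
  have haB : a ∉ B := fun h => hnadj (memB.1 h).symm
  have hbA : b ∉ A := fun h => hnadj (memA.1 h)
  have hbB : b ∉ B := fun h => G.loopless.irrefl b (memB.1 h)
  have haS : a ∉ S := by rw [hSdef, Finset.mem_union]; tauto
  have hbS : b ∉ S := by rw [hSdef, Finset.mem_union]; tauto
  have hCA : C ⊆ A := Finset.inter_subset_left
  have hCB : C ⊆ B := Finset.inter_subset_right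
  have hCS : C ⊆ S := hCA.trans Finset.subset_union_left
  have hc3 : 3 ≤ C.card := hy ▸ Finset.card_filter_le C _
  have hSC : S.card + C.card = 10 := by
    rw [hSdef, hCdef, Finset.card_union_add_card_inter, hcA, hcB]
  -- handshake
  have hsum : ∑ v : V, G.degree v = 44 := by
    rw [G.sum_degrees_eq_twice_card_edges, hcard]
  -- the swap identity
  have hswap : ∑ v ∈ S, G.degree v = ∑ u : V, (G.neighborFinset u ∩ S).card := by
    have h1 : ∀ v : V, G.degree v = ∑ u : V, if G.Adj v u then 1 else 0 := fun v => by
      rw [← G.card_neighborFinset_eq_degree, SimpleGraph.neighborFinset_eq_filter,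
        Finset.card_filter]
    have h2 : ∀ u : V, (G.neighborFinset u ∩ S).card
        = ∑ v ∈ S, if G.Adj v u then 1 else 0 := fun u => by
      rw [SimpleGraph.neighborFinset_eq_filter,
        show Finset.univ.filter (G.Adj u) ∩ S = S.filter (fun v => G.Adj v u) from by
          ext w; simp [G.adj_comm, and_comm], Finset.card_filter]
    simp_rw [h1, h2]
    exact Finset.sum_comm
  -- values of f u := |N(u) ∩ S|
  have hfa : (G.neighborFinset a ∩ S).card = 5 := by
    rw [show G.neighborFinset a ∩ S = A from
      Finset.inter_eq_left.mpr Finset.subset_union_left, hcA]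
  have hfb : (G.neighborFinset b ∩ S).card = 5 := by
    rw [show G.neighborFinset b ∩ S = B from
      Finset.inter_eq_left.mpr Finset.subset_union_right, hcB]
  have hfC : ∀ u ∈ C, G.neighborFinset u ∩ S = ∅ := by
    intro u hu
    ext w
    simp only [Finset.mem_inter, SimpleGraph.mem_neighborFinset, Finset.notMem_empty,
      iff_false, not_and, hSdef, Finset.mem_union]
    rintro huw (hw | hw)
    · exact tri a u w (memA.1 (hCA hu)) (memA.1 hw) huw
    · exact tri b u w (memB.1 (hCB hu)) (memB.1 hw) huw
  have hfS : ∀ u ∈ S \ C, (G.neighborFinset u ∩ S).card ≤ 5 - C.card := by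
    intro u hu
    rw [Finset.mem_sdiff, hSdef, Finset.mem_union] at hu
    obtain ⟨hu1 | hu1, _⟩ := hu
    · have hsub : G.neighborFinset u ∩ S ⊆ B \ C := by
        intro w hw
        rw [Finset.mem_inter, SimpleGraph.mem_neighborFinset] at hw
        obtain ⟨huw, hwS⟩ := hw
        rw [hSdef, Finset.mem_union] at hwS
        have hwB : w ∈ B := by
          rcases hwS with h | h
          · exact (tri a u w (memA.1 hu1) (memA.1 h) huw).elim
          · exact h
        exact Finset.mem_sdiff.mpr ⟨hwB,
          fun hwC => tri a u w (memA.1 hu1) (memA.1 (hCA hwC)) huw⟩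
      calc (G.neighborFinset u ∩ S).card ≤ (B \ C).card := Finset.card_le_card hsub
        _ = 5 - C.card := by rw [Finset.card_sdiff_of_subset hCB, hcB]
    · have hsub : G.neighborFinset u ∩ S ⊆ A \ C := by
        intro w hw
        rw [Finset.mem_inter, SimpleGraph.mem_neighborFinset] at hw
        obtain ⟨huw, hwS⟩ := hw
        rw [hSdef, Finset.mem_union] at hwS
        have hwA : w ∈ A := by
          rcases hwS with h | h
          · exact h
          · exact (tri b u w (memB.1 hu1) (memB.1 h) huw).elim
        exact Finset.mem_sdiff.mpr ⟨hwA,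
          fun hwC => tri b u w (memB.1 hu1) (memB.1 (hCB hwC)) huw⟩
      calc (G.neighborFinset u ∩ S).card ≤ (A \ C).card := Finset.card_le_card hsub
        _ = 5 - C.card := by rw [Finset.card_sdiff_of_subset hCA, hcA]
  -- lower bound on sums of degrees
  have hD : ∑ v ∈ C.filter (fun v => G.degree v = 4), G.degree v = 12 := by
    rw [Finset.sum_congr rfl (fun v hv => (Finset.mem_filter.1 hv).2), Finset.sum_const, hy]
    rfl
  have hnot4 : ∀ v ∈ C.filter (fun v => ¬ G.degree v = 4), G.degree v = 5 := by
    intro v hv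
    rw [Finset.mem_filter] at hv
    have h3 : G.degree v ≠ 3 := by
      intro h
      rw [Finset.card_eq_zero] at hx
      exact absurd (Finset.mem_filter.2 ⟨hv.1, h⟩) (by rw [hx]; exact Finset.notMem_empty v)
    have := hmin v; have := hmax v
    omega
  have hfilters : (C.filter (fun v => G.degree v = 4)).card
      + (C.filter (fun v => ¬ G.degree v = 4)).card = C.card :=
    Finset.card_filter_add_card_filter_not _
  have hsumC : ∑ v ∈ C, G.degree v = 12 + 5 * (C.card - 3) := by
    rw [← Finset.sum_filter_add_sum_filter_not C (fun v => G.degree v = 4), hD,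
      Finset.sum_congr rfl hnot4, Finset.sum_const, smul_eq_mul]
    rw [hy] at hfilters
    omega
  have hsumSC : 4 * (S \ C).card ≤ ∑ v ∈ S \ C, G.degree v := by
    rw [mul_comm, ← smul_eq_mul]
    refine Finset.card_nsmul_le_sum _ _ _ ?_
    intro u hu
    rw [Finset.mem_sdiff, hSdef, Finset.mem_union] at hu
    obtain ⟨hu1 | hu1, hu2⟩ := hu
    · exact hua u (Finset.mem_sdiff.2 ⟨hu1, fun hB => hu2 (Finset.mem_inter.2 ⟨hu1, hB⟩)⟩)
    · exact hub u (Finset.mem_sdiff.2 ⟨hu1, fun hA => hu2 (Finset.mem_inter.2 ⟨hA, hu1⟩)⟩)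
  have hsplitS : ∑ v ∈ S \ C, G.degree v + ∑ v ∈ C, G.degree v = ∑ v ∈ S, G.degree v :=
    Finset.sum_sdiff hCS
  have hcardSC : (S \ C).card = S.card - C.card := Finset.card_sdiff_of_subset hCS
  -- upper bound via the swap
  set U : Finset V := insert a (insert b S) with hUdef
  have haU : a ∉ insert b S := by
    rw [Finset.mem_insert]; push_neg; exact ⟨hab, haS⟩
  have hsumU : ∑ u ∈ U, G.degree u = 10 + ∑ v ∈ S, G.degree v := by
    rw [hUdef, Finset.sum_insert haU, Finset.sum_insert hbS, hda, hdb]; ring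
  have hsplitU : ∑ u ∈ Finset.univ \ U, G.degree u + ∑ u ∈ U, G.degree u
      = ∑ u : V, G.degree u := Finset.sum_sdiff (Finset.subset_univ U)
  have hfU : ∑ u ∈ U, (G.neighborFinset u ∩ S).card
      ≤ 10 + (S \ C).card * (5 - C.card) := by
    rw [hUdef, Finset.sum_insert haU, Finset.sum_insert hbS, hfa, hfb]
    have hS0 : ∑ u ∈ S, (G.neighborFinset u ∩ S).card
        = ∑ u ∈ S \ C, (G.neighborFinset u ∩ S).card := by
      rw [← Finset.sum_sdiff hCS]
      have hz : ∑ u ∈ C, (G.neighborFinset u ∩ S).card = 0 :=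
        Finset.sum_eq_zero (fun u hu => by rw [hfC u hu, Finset.card_empty])
      omega
    rw [hS0]
    have := Finset.sum_le_card_nsmul (S \ C) (fun u => (G.neighborFinset u ∩ S).card)
      (5 - C.card) hfS
    rw [smul_eq_mul] at this
    omega
  have hfR : ∑ u ∈ Finset.univ \ U, (G.neighborFinset u ∩ S).card
      ≤ ∑ u ∈ Finset.univ \ U, G.degree u := by
    refine Finset.sum_le_sum ?_
    intro u _
    rw [← G.card_neighborFinset_eq_degree]
    exact Finset.card_le_card Finset.inter_subset_left
  have hsplitF : ∑ u ∈ Finset.univ \ U, (G.neighborFinset u ∩ S).card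
      + ∑ u ∈ U, (G.neighborFinset u ∩ S).card
      = ∑ u : V, (G.neighborFinset u ∩ S).card := Finset.sum_sdiff (Finset.subset_univ U)
  -- assemble
  have hc34 : C.card = 3 ∨ C.card = 4 := by omega
  rw [hsum] at hsplitU
  rw [← hswap] at hsplitF
  rcases hc34 with hc | hc <;> rw [hc] at hsumC hfU <;> omega
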